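/- Let λ ∈ ℂ with |λ| = 1, λ not a root of unity. Let p₂ = −1/2, and let q(t) = 1 + q₂t² + Σ_{k≥2} q_{2k} t^{2k} be an even formal series whose quadratic coefficient satisfies q₂(λ+1)² = p₂(λ−1)². Let φ be normalized and symmetric. Then there exists a formal power series Δq(t) = Σ_{k≥2} η_{2k} t^{2k} such that both Π₊( ℰ(q+Δq, φ)·φ_z ) = 0 and Π( ℰ(q+Δq, φ)·φ_z̄ ) = 0 hold; equivalently [S_{q+Δq}(φ⁻,φ)] = 1. Moreover the coefficients η_{2k} are uniquely determined by a lower-triangular recursion. -/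

import Mathlib

/- Common setup: formal power series in two commuting variables `z, z̄` over `ℂ`,
represented by their coefficient functions, together with the operators of
Treschev's linearizable billiard construction. -/

open scoped BigOperators

noncomputable section

namespace Treschev

/-- A formal power series `f = Σ_{j,k≥0} f_{j,k} z^j z̄^k`, given by its coefficients. -/
abbrev FPS : Type := ℕ → ℕ → ℂ

/-- A formal power series in one variable `t`, given by its coefficients. -/
abbrev OPS : Type := ℕ → ℂ

/-- Product of two formal power series (Cauchy product). -/
def fmul (f g : FPS) : FPS := fun j k =>
  ∑ a ∈ Finset.range (j + 1), ∑ b ∈ Finset.range (k + 1), f a b * g (j - a) (k - b)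

/-- The constant series `1`. -/
def oneF : FPS := fun j k => if j = 0 ∧ k = 0 then 1 else 0

/-- Powers of a formal power series. -/
def fpow (f : FPS) : ℕ → FPS
  | 0 => oneF
  | n + 1 => fmul f (fpow f n)

/-- Substitution of a two-variable series `u` with zero constant term into a
one-variable series `q` (the formula is the correct one whenever `u 0 0 = 0`). -/
def substOne (q : OPS) (u : FPS) : FPS := fun j k =>
  ∑ m ∈ Finset.range (j + k + 1), q m * fpow u m j k

/-- Substitution `F(u, v)` of two series with zero constant term into a two-variable
series `F` (the formula is the correct one whenever `u 0 0 = 0` and `v 0 0 = 0`). -/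
def subst2 (F : FPS) (u v : FPS) : FPS := fun j k =>
  ∑ m ∈ Finset.range (j + k + 1), ∑ n ∈ Finset.range (j + k + 1),
    F m n * fmul (fpow u m) (fpow v n) j k

/-- The Taylor series of `cos`. -/
def cosSeries : OPS := fun n => if n % 2 = 0 then (-1 : ℂ) ^ (n / 2) / (n.factorial : ℂ) else 0

/-- `(t₁ + t₂)/2` as a two-variable series. -/
def halfSum : FPS := fun j k =>
  if j = 1 ∧ k = 0 then (1 / 2 : ℂ) else if j = 0 ∧ k = 1 then (1 / 2 : ℂ) else 0

/-- `(t₁ − t₂)/2` as a two-variable series. -/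
def halfDiff : FPS := fun j k =>
  if j = 1 ∧ k = 0 then (1 / 2 : ℂ) else if j = 0 ∧ k = 1 then (-(1 / 2) : ℂ) else 0

/-- The generating function `S_q(t₁,t₂) = q((t₁+t₂)/2)·cos((t₁−t₂)/2)` as a
formal power series in `t₁, t₂`. -/
def Sq (q : OPS) : FPS := fmul (substOne q halfSum) (substOne cosSeries halfDiff)

/-- Formal partial derivative with respect to the first variable. -/
def d1 (f : FPS) : FPS := fun j k => ((j + 1 : ℕ) : ℂ) * f (j + 1) k

/-- Formal partial derivative with respect to the second variable. -/
def d2 (f : FPS) : FPS := fun j k => ((k + 1 : ℕ) : ℂ) * f j (k + 1)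

/-- `f⁺`, with `(f⁺)_{j,k} = λ^{j−k} f_{j,k}`. -/
def plus (l : ℂ) (f : FPS) : FPS := fun j k => l ^ ((j : ℤ) - (k : ℤ)) * f j k

/-- `f⁻`, with `(f⁻)_{j,k} = λ^{k−j} f_{j,k}`. -/
def minus (l : ℂ) (f : FPS) : FPS := fun j k => l ^ ((k : ℤ) - (j : ℤ)) * f j k

/-- `∇f = f⁻ − λ⁻¹ f`. -/
def nab (l : ℂ) (f : FPS) : FPS := minus l f - l⁻¹ • f

/-- `∇⁺f = f − λ f⁺`. -/
def nabPlus (l : ℂ) (f : FPS) : FPS := f - l • plus l f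

/-- The average `[f] = Σ_j f_{j,j} (z z̄)^j`. -/
def avg (f : FPS) : FPS := fun j k => if j = k then f j k else 0

/-- The projection `Π₊(f) = [z f]/z`. -/
def Pip (f : FPS) : FPS := fun j k => if k = j + 1 then f j k else 0

/-- The projection `Π(f) = [z̄ f]/z̄`. -/
def Pim (f : FPS) : FPS := fun j k => if j = k + 1 then f j k else 0

/-- `E⁺`, the partial inverse of `∇⁺`. -/
def Eplus (l : ℂ) (f : FPS) : FPS := fun j k =>
  if k = j + 1 then 0 else f j k / (1 - l ^ ((j : ℤ) - (k : ℤ) + 1))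

/-- `E`, the partial inverse of `∇`. -/
def Emin (l : ℂ) (f : FPS) : FPS := fun j k =>
  if j = k + 1 then 0 else f j k / (l ^ ((k : ℤ) - (j : ℤ)) - l⁻¹)

/-- `Ẽ`, with `Ẽ(f − f⁺) = f − [f]`. -/
def Etilde (l : ℂ) (f : FPS) : FPS := fun j k =>
  if j = k then 0 else f j k / (1 - l ^ ((j : ℤ) - (k : ℤ)))

/-- `f ∘ I`, where `I(z,z̄) = (z̄,z)`. -/
def swapI (f : FPS) : FPS := fun j k => f k j

/-- Multiplication by `z`. -/
def mulz (f : FPS) : FPS := fun j k => if j = 0 then 0 else f (j - 1) k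

/-- Multiplication by `z̄`. -/
def mulzbar (f : FPS) : FPS := fun j k => if k = 0 then 0 else f j (k - 1)

/-- Division by `z` (valid on series divisible by `z`). -/
def divz (f : FPS) : FPS := fun j k => f (j + 1) k

/-- Multiplicative inverse `1/h` (the geometric-series formula, which is the correct
inverse whenever `h 0 0 ≠ 0`). -/
def finv (h : FPS) : FPS := fun j k =>
  (h 0 0)⁻¹ * ∑ m ∈ Finset.range (j + k + 1),
    fpow (fun a b => if a = 0 ∧ b = 0 then 0 else -(h a b) * (h 0 0)⁻¹) m j k

/-- Quotient `f/h` of formal power series. -/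
def fdiv (f h : FPS) : FPS := fmul f (finv h)

/-- `ℰ(q,φ) = ∂₂S_q(φ⁻,φ) + ∂₁S_q(φ,φ⁺)`. -/
def Err (l : ℂ) (q : OPS) (φ : FPS) : FPS :=
  subst2 (d2 (Sq q)) (minus l φ) φ + subst2 (d1 (Sq q)) φ (plus l φ)

/-- `∂_φℰ(q,φ)(w) = ∂₁₂S_q(φ⁻,φ)w⁻ + ∂₂₂S_q(φ⁻,φ)w + ∂₁₁S_q(φ,φ⁺)w + ∂₁₂S_q(φ,φ⁺)w⁺`. -/
def dErr (l : ℂ) (q : OPS) (φ : FPS) (w : FPS) : FPS :=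
  fmul (subst2 (d1 (d2 (Sq q))) (minus l φ) φ) (minus l w)
    + fmul (subst2 (d2 (d2 (Sq q))) (minus l φ) φ) w
    + fmul (subst2 (d1 (d1 (Sq q))) φ (plus l φ)) w
    + fmul (subst2 (d1 (d2 (Sq q))) φ (plus l φ)) (plus l w)

/-- `h = ∂₁₂S_q(φ⁻,φ)·φ_z·φ_z⁻`. -/
def hFun (l : ℂ) (q : OPS) (φ : FPS) : FPS :=
  fmul (fmul (subst2 (d1 (d2 (Sq q))) (minus l φ) φ) (d1 φ)) (minus l (d1 φ))

/-- `ψ = −E⁺( ℰ(q,φ)·φ_z − Π₊(ℰ(q,φ)·φ_z) )`. -/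
def psiFun (l : ℂ) (q : OPS) (φ : FPS) : FPS :=
  -Eplus l (fmul (Err l q φ) (d1 φ) - Pip (fmul (Err l q φ) (d1 φ)))

/-- `w = φ_z·E( ψ/h − Π(ψ/h) )`. -/
def wFun (l : ℂ) (q : OPS) (φ : FPS) : FPS :=
  fmul (d1 φ)
    (Emin l (fdiv (psiFun l q φ) (hFun l q φ) - Pim (fdiv (psiFun l q φ) (hFun l q φ))))

/-- `κ = ∂₁₂S_q(φ⁻,φ)·(λ⁻¹ φ_z⁻ φ_z̄ − λ φ_z̄⁻ φ_z)`. -/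
def kappaFun (l : ℂ) (q : OPS) (φ : FPS) : FPS :=
  fmul (subst2 (d1 (d2 (Sq q))) (minus l φ) φ)
    (l⁻¹ • fmul (minus l (d1 φ)) (d2 φ) - l • fmul (minus l (d2 φ)) (d1 φ))

/-- `g = φ_z̄ / φ_z`. -/
def gFun (φ : FPS) : FPS := fdiv (d2 φ) (d1 φ)

/-- `R₁ = ( −[z̄·ℰ·φ_z̄] + [z̄·g·[z·ℰ·φ_z]/z] ) / ( λ·z·[κ] )`. -/
def R1Fun (l : ℂ) (q : OPS) (φ : FPS) : FPS :=
  l⁻¹ • fmul (finv (avg (kappaFun l q φ)))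
    (divz (-avg (mulzbar (fmul (Err l q φ) (d2 φ)))
      + avg (mulzbar (fmul (gFun φ) (divz (avg (mulz (fmul (Err l q φ) (d1 φ)))))))))

/-- `R₂ = (1/z)·[ z̄·ψ·(λ⁻¹g − λg⁻)·([κ]−κ)/(κ·[κ]) ]`. -/
def R2Fun (l : ℂ) (q : OPS) (φ : FPS) : FPS :=
  divz (avg (mulzbar
    (fmul (fmul (psiFun l q φ) (l⁻¹ • gFun φ - l • minus l (gFun φ)))
      (fmul (avg (kappaFun l q φ) - kappaFun l q φ)
        (finv (fmul (kappaFun l q φ) (avg (kappaFun l q φ))))))))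

/-- `R₃ = [z·∂_z(S_q(φ⁻,φ))]/z − ∇⁺( h·Π(ψ/h) )`. -/
def R3Fun (l : ℂ) (q : OPS) (φ : FPS) : FPS :=
  Pip (d1 (subst2 (Sq q) (minus l φ) φ))
    - nabPlus l (fmul (hFun l q φ) (Pim (fdiv (psiFun l q φ) (hFun l q φ))))

/-- `R₄ = ∂_z(ℰ(q,φ))·(w/φ_z) + R₃/φ_z`. -/
def R4Fun (l : ℂ) (q : OPS) (φ : FPS) : FPS :=
  fmul (d1 (Err l q φ)) (fdiv (wFun l q φ) (d1 φ)) + fdiv (R3Fun l q φ) (d1 φ)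

/-- `φ = z + z̄ + O₃`. -/
def normalized (φ : FPS) : Prop :=
  φ 0 0 = 0 ∧ φ 1 0 = 1 ∧ φ 0 1 = 1 ∧ φ 2 0 = 0 ∧ φ 1 1 = 0 ∧ φ 0 2 = 0

/-- The weighted norm `‖f‖_ρ = Σ_{j,k} |f_{j,k}| ρ^{j+k} ∈ [0,∞]`. -/
def wnorm (ρ : ℝ) (f : FPS) : ENNReal :=
  ∑' p : ℕ × ℕ, ENNReal.ofReal (‖f p.1 p.2‖ * ρ ^ (p.1 + p.2))

/-- `D(f) = Σ_{n≥1} n f_n (z z̄)^n` for a series in `z z̄`. -/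
def Dop (f : FPS) : FPS := fun j k => if j = k then (j : ℂ) * f j k else 0

/-- `D̄(f − f₀) = Σ_{n≥1} (f_n/n) (z z̄)^n` for a series in `z z̄`. -/
def Dbar (f : FPS) : FPS := fun j k => if j = k ∧ j ≠ 0 then f j k / (j : ℂ) else 0

/-- The constant part `f₀` of a series. -/
def constPart (f : FPS) : FPS := fun j k => if j = 0 ∧ k = 0 then f 0 0 else 0

/-- `ξ₀ = ((λ⁻¹+1)z + (λ+1)z̄)/2`. -/
def xi0 (l : ℂ) : FPS := fun a b =>
  if a = 1 ∧ b = 0 then (l⁻¹ + 1) / 2 else if a = 0 ∧ b = 1 then (l + 1) / 2 else 0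

/-! ### Transport to iterated power series -/

abbrev RR := PowerSeries (PowerSeries ℂ)

/-- Transport `FPS` into `ℂ⟦X⟧⟦X⟧`. -/
def T (f : FPS) : RR := PowerSeries.mk fun j => PowerSeries.mk fun k => f j k

lemma T_coeff (f : FPS) (j k : ℕ) :
    PowerSeries.coeff k (PowerSeries.coeff j (T f)) = f j k := by
  simp [T]

lemma T_injective : Function.Injective T := by
  intro f g h
  funext j k
  rw [← T_coeff f j k, ← T_coeff g j k, h]

lemma T_add (f g : FPS) : T (f + g) = T f + T g := by
  apply PowerSeries.ext; intro j
  apply PowerSeries.ext; intro k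
  simp [T, Pi.add_apply]

lemma T_zero : T 0 = 0 := by
  apply PowerSeries.ext; intro j
  apply PowerSeries.ext; intro k
  simp [T]

lemma T_sum {α : Type*} (s : Finset α) (F : α → FPS) :
    T (∑ i ∈ s, F i) = ∑ i ∈ s, T (F i) :=
  map_sum (AddMonoidHom.mk' T T_add) F s

lemma T_smul (c : ℂ) (f : FPS) : T (c • f) = PowerSeries.C (PowerSeries.C c) * T f := by
  apply PowerSeries.ext; intro j
  rw [PowerSeries.coeff_C_mul]
  apply PowerSeries.ext; intro k
  simp [T]

lemma T_one : T oneF = 1 := by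
  apply PowerSeries.ext; intro j
  apply PowerSeries.ext; intro k
  simp only [T, PowerSeries.coeff_mk, oneF]
  by_cases hj : j = 0
  · subst hj
    by_cases hk : k = 0 <;> simp [PowerSeries.coeff_one, hk]
  · simp [PowerSeries.coeff_one, hj]

lemma T_fmul (f g : FPS) : T (fmul f g) = T f * T g := by
  apply PowerSeries.ext; intro j
  rw [PowerSeries.coeff_mul]
  apply PowerSeries.ext; intro k
  rw [show (PowerSeries.coeff j) (T (fmul f g)) = PowerSeries.mk fun k => fmul f g j k from by simp [T]]
  rw [PowerSeries.coeff_mk]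
  simp only [fmul]
  rw [Finset.Nat.sum_antidiagonal_eq_sum_range_succ_mk]
  rw [map_sum]
  refine Finset.sum_congr rfl fun a _ => ?_
  rw [PowerSeries.coeff_mul, Finset.Nat.sum_antidiagonal_eq_sum_range_succ_mk]
  refine Finset.sum_congr rfl fun b _ => ?_
  simp [T]

lemma T_fpow (f : FPS) (n : ℕ) : T (fpow f n) = (T f) ^ n := by
  induction n with
  | zero => simpa [fpow] using T_one
  | succ n ih => rw [fpow, T_fmul, ih, pow_succ, mul_comm]

/-! basic fmul algebra via transport -/

lemma fmul_comm (f g : FPS) : fmul f g = fmul g f := by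
  apply T_injective; rw [T_fmul, T_fmul, mul_comm]

lemma fmul_assoc (f g h : FPS) : fmul (fmul f g) h = fmul f (fmul g h) := by
  apply T_injective; simp only [T_fmul]; ring

lemma fmul_right_comm (f g h : FPS) : fmul (fmul f g) h = fmul (fmul f h) g := by
  apply T_injective; simp only [T_fmul]; ring

lemma fmul_add (f g h : FPS) : fmul f (g + h) = fmul f g + fmul f h := by
  apply T_injective; simp only [T_fmul, T_add]; ring

lemma fmul_add_left (f g h : FPS) : fmul (f + g) h = fmul f h + fmul g h := by
  apply T_injective; simp only [T_fmul, T_add]; ring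

lemma fmul_smul (c : ℂ) (f g : FPS) : fmul f (c • g) = c • fmul f g := by
  apply T_injective; simp only [T_fmul, T_smul]; ring

lemma fmul_smul_left (c : ℂ) (f g : FPS) : fmul (c • f) g = c • fmul f g := by
  apply T_injective; simp only [T_fmul, T_smul]; ring

lemma fmul_one (f : FPS) : fmul f oneF = f := by
  apply T_injective; rw [T_fmul, T_one, mul_one]

lemma one_fmul (f : FPS) : fmul oneF f = f := by
  apply T_injective; rw [T_fmul, T_one, one_mul]

lemma fmul_zero (f : FPS) : fmul f 0 = 0 := by
  apply T_injective; simp [T_fmul, T_zero]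

lemma zero_fmul (f : FPS) : fmul 0 f = 0 := by
  apply T_injective; simp [T_fmul, T_zero]

/-- binomial formula for `fpow`. -/
lemma fpow_add (f g : FPS) (M : ℕ) :
    fpow (f + g) M
      = ∑ m ∈ Finset.range (M + 1),
          ((M.choose m : ℂ)) • fmul (fpow f m) (fpow g (M - m)) := by
  apply T_injective
  rw [T_fpow, T_add, add_pow]
  rw [T_sum]
  refine Finset.sum_congr rfl fun m hm => ?_
  rw [T_smul, T_fmul, T_fpow, T_fpow, map_natCast, map_natCast]
  ring
/-! ### Derivatives -/

lemma T_d1 (f : FPS) : T (d1 f) = PowerSeries.derivativeFun (T f) := by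
  apply PowerSeries.ext; intro j
  rw [show PowerSeries.derivativeFun (T f) = PowerSeries.derivative _ (T f) from rfl,
    PowerSeries.coeff_derivative]
  have hc : ((j : PowerSeries ℂ) + 1) = PowerSeries.C ((j : ℂ) + 1) := by
    simp [map_add, map_natCast]
  rw [hc, mul_comm]
  apply PowerSeries.ext; intro k
  rw [PowerSeries.coeff_C_mul]
  simp [T, d1]
  try ring

lemma d1_oneF : d1 oneF = 0 := by
  funext j k; simp [d1, oneF]

lemma d1_add (f g : FPS) : d1 (f + g) = d1 f + d1 g := by
  funext j k; simp [d1, Pi.add_apply]; ring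

lemma d1_smul (c : ℂ) (f : FPS) : d1 (c • f) = c • d1 f := by
  funext j k; simp [d1, Pi.smul_apply]; ring

lemma d1_fmul (f g : FPS) : d1 (fmul f g) = fmul (d1 f) g + fmul f (d1 g) := by
  apply T_injective
  simp only [T_add, T_d1, T_fmul, PowerSeries.derivativeFun_mul, smul_eq_mul]
  ring

lemma swapI_swapI (f : FPS) : swapI (swapI f) = f := rfl

lemma swapI_add (f g : FPS) : swapI (f + g) = swapI f + swapI g := rfl

lemma swapI_fmul (f g : FPS) : swapI (fmul f g) = fmul (swapI f) (swapI g) := by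
  funext j k
  simp only [swapI, fmul]
  rw [Finset.sum_comm]

lemma swapI_d1 (f : FPS) : swapI (d1 f) = d2 (swapI f) := rfl

lemma swapI_d2 (f : FPS) : swapI (d2 f) = d1 (swapI f) := rfl

lemma d2_eq_swap (f : FPS) : d2 f = swapI (d1 (swapI f)) := rfl

lemma d2_fmul (f g : FPS) : d2 (fmul f g) = fmul (d2 f) g + fmul f (d2 g) := by
  rw [d2_eq_swap, swapI_fmul, d1_fmul, swapI_add, swapI_fmul, swapI_fmul]
  rfl

lemma d1_fpow (u : FPS) (m : ℕ) :
    d1 (fpow u (m + 1)) = ((m + 1 : ℕ) : ℂ) • fmul (fpow u m) (d1 u) := by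
  induction m with
  | zero =>
      show d1 (fmul u (fpow u 0)) = _
      rw [show fpow u 0 = oneF from rfl, fmul_one, one_fmul]
      norm_num
  | succ m ih =>
      show d1 (fmul u (fpow u (m+1))) = _
      rw [d1_fmul, ih, fmul_smul]
      have h1 : fmul (d1 u) (fpow u (m + 1)) = fmul (fpow u (m+1)) (d1 u) := fmul_comm _ _
      rw [h1]
      have h2 : fmul u (fmul (fpow u m) (d1 u)) = fmul (fpow u (m+1)) (d1 u) := by
        rw [show fpow u (m+1) = fmul u (fpow u m) from rfl, fmul_assoc]
      rw [h2]
      funext j k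
      simp only [Pi.add_apply, Pi.smul_apply, smul_eq_mul]
      push_cast
      ring

lemma d2_fpow (u : FPS) (m : ℕ) :
    d2 (fpow u (m + 1)) = ((m + 1 : ℕ) : ℂ) • fmul (fpow u m) (d2 u) := by
  have swapI_fpow : ∀ (v : FPS) (n : ℕ), swapI (fpow v n) = fpow (swapI v) n := by
    intro v n
    induction n with
    | zero => funext j k; simp [fpow, swapI, oneF, and_comm]
    | succ n ih => show swapI (fmul v (fpow v n)) = _; rw [swapI_fmul, ih]; rfl
  have : d2 (fpow u (m+1)) = swapI (d1 (fpow (swapI u) (m+1))) := by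
    rw [d2_eq_swap, swapI_fpow]
  rw [this, d1_fpow]
  funext j k
  simp only [swapI, Pi.smul_apply, smul_eq_mul]
  congr 1
  rw [show fmul (fpow (swapI u) m) (d1 (swapI u)) k j
      = swapI (fmul (fpow (swapI u) m) (d1 (swapI u))) j k from rfl]
  rw [swapI_fmul, swapI_fpow, swapI_swapI, swapI_d1, swapI_swapI]

/-! ### Degree lemmas -/

lemma fpow_eq_zero_of_lt {u : FPS} (hu : u 0 0 = 0) :
    ∀ {m j k : ℕ}, j + k < m → fpow u m j k = 0 := by
  intro m
  induction m with
  | zero => intro j k h; omega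
  | succ m ih =>
      intro j k h
      show fmul u (fpow u m) j k = 0
      unfold fmul
      refine Finset.sum_eq_zero fun a ha => Finset.sum_eq_zero fun b hb => ?_
      simp only [Finset.mem_range] at ha hb
      by_cases h0 : a = 0 ∧ b = 0
      · rw [h0.1, h0.2, hu, zero_mul]
      · have : (j - a) + (k - b) < m := by omega
        rw [ih this, mul_zero]

lemma fmul_fpow_right_eq_zero {v : FPS} (hv : v 0 0 = 0) (f : FPS) {n j k : ℕ}
    (h : j + k < n) : fmul f (fpow v n) j k = 0 := by
  unfold fmul
  refine Finset.sum_eq_zero fun a ha => Finset.sum_eq_zero fun b hb => ?_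
  simp only [Finset.mem_range] at ha hb
  have : (j - a) + (k - b) < n := by omega
  rw [fpow_eq_zero_of_lt hv this, mul_zero]

lemma fmul_fpow_fpow_eq_zero {u v : FPS} (hu : u 0 0 = 0) (hv : v 0 0 = 0)
    {m n j k : ℕ} (h : j + k < m + n) : fmul (fpow u m) (fpow v n) j k = 0 := by
  unfold fmul
  refine Finset.sum_eq_zero fun a ha => Finset.sum_eq_zero fun b hb => ?_
  simp only [Finset.mem_range] at ha hb
  by_cases hab : a + b < m
  · rw [fpow_eq_zero_of_lt hu hab, zero_mul]
  · have : (j - a) + (k - b) < n := by omega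
    rw [fpow_eq_zero_of_lt hv this, mul_zero]

/-! ### Linear series and top-degree coefficients -/

/-- a linear series `x z + y z̄`. -/
def lin (x y : ℂ) : FPS := fun a b =>
  if a = 1 ∧ b = 0 then x else if a = 0 ∧ b = 1 then y else 0

lemma fmul_lin (x y : ℂ) (P : FPS) (j k : ℕ) :
    fmul (lin x y) P j k
      = (if 1 ≤ j then x * P (j - 1) k else 0) + (if 1 ≤ k then y * P j (k - 1) else 0) := by
  unfold fmul
  have key : ∀ a b : ℕ,
      lin x y a b * P (j - a) (k - b)
      = (if b = 0 then (if a = 1 then x * P (j - 1) k else 0) else 0)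
        + (if b = 1 then (if a = 0 then y * P j (k - 1) else 0) else 0) := by
    intro a b
    unfold lin
    by_cases h1 : a = 1 ∧ b = 0
    · rw [h1.1, h1.2]; simp
    · by_cases h2 : a = 0 ∧ b = 1
      · rw [h2.1, h2.2]; simp
      · rw [if_neg h1, if_neg h2, zero_mul]
        rcases Decidable.not_and_iff_or_not.mp h1 with h | h <;>
          rcases Decidable.not_and_iff_or_not.mp h2 with h' | h' <;>
          simp [h, h']
  simp only [key, Finset.sum_add_distrib]
  congr 1
  · have inner : ∀ a ∈ Finset.range (j + 1),
        (∑ b ∈ Finset.range (k + 1),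
          if b = 0 then (if a = 1 then x * P (j - 1) k else 0) else 0)
        = if a = 1 then x * P (j - 1) k else 0 := by
      intro a _
      rw [Finset.sum_ite_eq' (Finset.range (k + 1)) 0]
      simp
    rw [Finset.sum_congr rfl inner, Finset.sum_ite_eq' (Finset.range (j + 1)) 1]
    by_cases hj : 1 ≤ j
    · rw [if_pos (Finset.mem_range.mpr (by omega)), if_pos hj]
    · rw [if_neg (fun hm => hj (by have := Finset.mem_range.mp hm; omega)),
        if_neg hj]
  · by_cases hk : 1 ≤ k
    · have inner : ∀ a ∈ Finset.range (j + 1),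
          (∑ b ∈ Finset.range (k + 1),
            if b = 1 then (if a = 0 then y * P j (k - 1) else 0) else 0)
          = if a = 0 then y * P j (k - 1) else 0 := by
        intro a _
        rw [Finset.sum_ite_eq' (Finset.range (k + 1)) 1]
        rw [if_pos (Finset.mem_range.mpr (by omega))]
      rw [Finset.sum_congr rfl inner, Finset.sum_ite_eq' (Finset.range (j + 1)) 0,
        if_pos (Finset.mem_range.mpr (by omega)), if_pos hk]
    · have inner : ∀ a ∈ Finset.range (j + 1),
          (∑ b ∈ Finset.range (k + 1),
            if b = 1 then (if a = 0 then y * P j (k - 1) else 0) else 0) = 0 := by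
        intro a _
        refine Finset.sum_eq_zero fun b hb => ?_
        have : b ≠ 1 := by
          have := Finset.mem_range.mp hb; omega
        simp [this]
      rw [Finset.sum_congr rfl inner, if_neg hk, Finset.sum_const_zero]

lemma lin_pow (x y : ℂ) : ∀ (m j k : ℕ),
    fpow (lin x y) m j k = if j + k = m then (m.choose j : ℂ) * x ^ j * y ^ k else 0 := by
  intro m
  induction m with
  | zero =>
      intro j k
      by_cases h : j = 0 ∧ k = 0
      · rw [h.1, h.2]; simp [fpow, oneF]
      · have h' : ¬(j + k = 0) := by omega
        have h0 : ¬(j = 0 ∧ k = 0) := h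
        simp [fpow, oneF, h0, h']
  | succ m ih =>
      intro j k
      show fmul (lin x y) (fpow (lin x y) m) j k = _
      rw [fmul_lin]
      rcases j with _ | jj
      · rcases k with _ | kk
        · norm_num
        · rw [if_neg (by omega), if_pos (Nat.succ_le_succ (Nat.zero_le kk))]
          simp only [ih, Nat.add_sub_cancel]
          split_ifs with h1 h2 <;> try omega
          · simp [pow_succ]; ring
          · simp
      · rcases k with _ | kk
        · rw [if_pos (Nat.succ_le_succ (Nat.zero_le jj)), if_neg (by omega)]
          simp only [ih, Nat.add_sub_cancel]
          split_ifs with h1 h2 <;> try omega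
          · have : jj = m := by omega
            subst this
            simp [Nat.choose_self, pow_succ]
            ring
          · simp
        · rw [if_pos (Nat.succ_le_succ (Nat.zero_le jj)),
            if_pos (Nat.succ_le_succ (Nat.zero_le kk))]
          simp only [ih, Nat.add_sub_cancel]
          have hch : ((m + 1).choose (jj + 1) : ℂ)
              = (m.choose jj : ℂ) + (m.choose (jj + 1) : ℂ) := by
            rw [← Nat.cast_add, Nat.choose_succ_succ]
          split_ifs with h1 h2 h3 <;> try omega
          · rw [hch, pow_succ, pow_succ]; ring
          · simp
/-! ### plus / minus -/

lemma plus_fmul {l : ℂ} (hl : l ≠ 0) (f g : FPS) :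
    plus l (fmul f g) = fmul (plus l f) (plus l g) := by
  funext j k
  simp only [plus, fmul, Finset.mul_sum]
  refine Finset.sum_congr rfl fun a ha => Finset.sum_congr rfl fun b hb => ?_
  simp only [Finset.mem_range] at ha hb
  have h1 : ((j - a : ℕ) : ℤ) = (j : ℤ) - (a : ℤ) := by omega
  have h2 : ((k - b : ℕ) : ℤ) = (k : ℤ) - (b : ℤ) := by omega
  rw [h1, h2, show (j : ℤ) - (k : ℤ) = ((a : ℤ) - b) + (((j:ℤ) - a) - ((k:ℤ) - b)) by ring,
    zpow_add₀ hl]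
  ring

lemma plus_oneF (l : ℂ) : plus l oneF = oneF := by
  funext j k
  by_cases h : j = 0 ∧ k = 0
  · rw [h.1, h.2]; simp [plus, oneF]
  · simp [plus, oneF, h]

lemma plus_fpow {l : ℂ} (hl : l ≠ 0) (f : FPS) (m : ℕ) :
    plus l (fpow f m) = fpow (plus l f) m := by
  induction m with
  | zero => exact plus_oneF l
  | succ m ih => show plus l (fmul f (fpow f m)) = _; rw [plus_fmul hl, ih]; rfl

lemma plus_minus {l : ℂ} (hl : l ≠ 0) (f : FPS) : plus l (minus l f) = f := by
  funext j k
  simp only [plus, minus, ← mul_assoc, ← zpow_add₀ hl]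
  rw [show (j : ℤ) - k + ((k : ℤ) - j) = 0 by ring]
  simp

lemma plus_subst2 {l : ℂ} (hl : l ≠ 0) (F u v : FPS) :
    plus l (subst2 F u v) = subst2 F (plus l u) (plus l v) := by
  funext j k
  simp only [plus, subst2, Finset.mul_sum]
  refine Finset.sum_congr rfl fun m _ => Finset.sum_congr rfl fun n _ => ?_
  rw [← plus_fpow hl, ← plus_fpow hl, ← plus_fmul hl]
  simp only [plus]
  ring

lemma d1_minus {l : ℂ} (hl : l ≠ 0) (φ : FPS) :
    d1 (minus l φ) = l⁻¹ • minus l (d1 φ) := by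
  funext j k
  simp only [d1, minus, Pi.smul_apply, smul_eq_mul]
  rw [show (k : ℤ) - ((j : ℕ) + 1 : ℕ) = (-1) + ((k : ℤ) - j) by push_cast; ring,
    zpow_add₀ hl, zpow_neg_one]
  ring

lemma d2_minus {l : ℂ} (hl : l ≠ 0) (φ : FPS) :
    d2 (minus l φ) = l • minus l (d2 φ) := by
  funext j k
  simp only [d2, minus, Pi.smul_apply, smul_eq_mul]
  rw [show ((k : ℕ) + 1 : ℕ) - (j : ℤ) = 1 + ((k : ℤ) - j) by push_cast; ring,
    zpow_add₀ hl, zpow_one]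
  ring

/-! ### subst2 basics -/

lemma subst2_extend {u v : FPS} (hu : u 0 0 = 0) (hv : v 0 0 = 0) (F : FPS)
    (j k N : ℕ) (h : j + k ≤ N) :
    subst2 F u v j k
      = ∑ m ∈ Finset.range (N + 1), ∑ n ∈ Finset.range (N + 1),
          F m n * fmul (fpow u m) (fpow v n) j k := by
  unfold subst2
  have step1 : ∀ m : ℕ,
      (∑ n ∈ Finset.range (j + k + 1), F m n * fmul (fpow u m) (fpow v n) j k)
      = ∑ n ∈ Finset.range (N + 1), F m n * fmul (fpow u m) (fpow v n) j k := by
    intro m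
    apply Finset.sum_subset (Finset.range_subset_range.mpr (by omega))
    intro n _ hn
    simp only [Finset.mem_range, not_lt] at hn
    rw [fmul_fpow_fpow_eq_zero hu hv (by omega), mul_zero]
  rw [Finset.sum_congr rfl fun m _ => step1 m]
  apply Finset.sum_subset (Finset.range_subset_range.mpr (by omega))
  intro m _ hm
  simp only [Finset.mem_range, not_lt] at hm
  refine Finset.sum_eq_zero fun n _ => ?_
  rw [fmul_fpow_fpow_eq_zero hu hv (by omega), mul_zero]

lemma subst2_addF (F G u v : FPS) :
    subst2 (F + G) u v = subst2 F u v + subst2 G u v := by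
  funext j k
  simp [subst2, add_mul, Finset.sum_add_distrib]

lemma subst2_smulF (c : ℂ) (F u v : FPS) :
    subst2 (c • F) u v = c • subst2 F u v := by
  funext j k
  simp [subst2, Finset.mul_sum, mul_assoc]

lemma swapI_fpow (v : FPS) (n : ℕ) : swapI (fpow v n) = fpow (swapI v) n := by
  induction n with
  | zero => funext j k; simp [fpow, swapI, oneF, and_comm]
  | succ n ih => show swapI (fmul v (fpow v n)) = _; rw [swapI_fmul, ih]; rfl

lemma swapI_subst2 (F u v : FPS) :
    swapI (subst2 F u v) = subst2 F (swapI u) (swapI v) := by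
  funext j k
  simp only [swapI, subst2]
  rw [show k + j = j + k by omega]
  refine Finset.sum_congr rfl fun m _ => Finset.sum_congr rfl fun n _ => ?_
  congr 1
  rw [show fmul (fpow u m) (fpow v n) k j = swapI (fmul (fpow u m) (fpow v n)) j k from rfl,
    swapI_fmul, swapI_fpow, swapI_fpow]

/-! ### low-degree vanishing helpers -/

lemma fmul_left_zero {X w : FPS} {j k : ℕ}
    (h : ∀ a b : ℕ, a ≤ j → b ≤ k → X a b = 0) : fmul X w j k = 0 := by
  unfold fmul
  refine Finset.sum_eq_zero fun a ha => Finset.sum_eq_zero fun b hb => ?_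
  simp only [Finset.mem_range] at ha hb
  rw [h a b (by omega) (by omega), zero_mul]

lemma fmul_fmul_fpow_low {u v : FPS} (hu : u 0 0 = 0) (hv : v 0 0 = 0)
    (w : FPS) {m n j k : ℕ} (h : j + k < m + n) :
    fmul (fmul (fpow u m) (fpow v n)) w j k = 0 := by
  apply fmul_left_zero
  intro a b ha hb
  exact fmul_fpow_fpow_eq_zero hu hv (by omega)

/-! ### the outer chain rule -/

lemma fmul_apply (f g : FPS) (j k : ℕ) :
    fmul f g j k = ∑ a ∈ Finset.range (j + 1), ∑ b ∈ Finset.range (k + 1),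
      f a b * g (j - a) (k - b) := rfl

lemma fmul_subst2_left {u v : FPS} (hu : u 0 0 = 0) (hv : v 0 0 = 0)
    (G w : FPS) (j k : ℕ) :
    fmul (subst2 G u v) w j k
      = ∑ m ∈ Finset.range (j + k + 2), ∑ n ∈ Finset.range (j + k + 2),
          G m n * fmul (fmul (fpow u m) (fpow v n)) w j k := by
  have e1 : fmul (subst2 G u v) w j k
      = ∑ a ∈ Finset.range (j + 1), ∑ b ∈ Finset.range (k + 1),
          ∑ m ∈ Finset.range (j + k + 2), ∑ n ∈ Finset.range (j + k + 2),
            G m n * fmul (fpow u m) (fpow v n) a b * w (j - a) (k - b) := by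
    rw [fmul_apply]
    refine Finset.sum_congr rfl fun a ha => Finset.sum_congr rfl fun b hb => ?_
    simp only [Finset.mem_range] at ha hb
    rw [subst2_extend hu hv G a b (j + k + 1) (by omega), Finset.sum_mul]
    refine Finset.sum_congr rfl fun m _ => ?_
    rw [Finset.sum_mul]
  rw [e1]
  have e2 : ∀ a ∈ Finset.range (j + 1),
      (∑ b ∈ Finset.range (k + 1), ∑ m ∈ Finset.range (j + k + 2),
        ∑ n ∈ Finset.range (j + k + 2),
          G m n * fmul (fpow u m) (fpow v n) a b * w (j - a) (k - b))
      = ∑ m ∈ Finset.range (j + k + 2), ∑ n ∈ Finset.range (j + k + 2),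
          ∑ b ∈ Finset.range (k + 1),
            G m n * fmul (fpow u m) (fpow v n) a b * w (j - a) (k - b) := by
    intro a _
    rw [Finset.sum_comm]
    exact Finset.sum_congr rfl fun m _ => Finset.sum_comm
  rw [Finset.sum_congr rfl e2, Finset.sum_comm]
  refine Finset.sum_congr rfl fun m _ => ?_
  rw [Finset.sum_comm]
  refine Finset.sum_congr rfl fun n _ => ?_
  rw [fmul_apply (fmul (fpow u m) (fpow v n)) w j k, Finset.mul_sum]
  refine Finset.sum_congr rfl fun a _ => ?_
  rw [Finset.mul_sum]
  exact Finset.sum_congr rfl fun b _ => by ring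
lemma d1_subst2 {u v : FPS} (hu : u 0 0 = 0) (hv : v 0 0 = 0) (F : FPS) :
    d1 (subst2 F u v)
      = fmul (subst2 (d1 F) u v) (d1 u) + fmul (subst2 (d2 F) u v) (d1 v) := by
  funext j k
  have hz : ∀ (m n : ℕ) (w : FPS), j + k < m + n →
      fmul (fmul (fpow u m) (fpow v n)) w j k = 0 :=
    fun m n w h => fmul_fmul_fpow_low hu hv w h
  have lhs1 : d1 (subst2 F u v) j k
      = ∑ m ∈ Finset.range (j + k + 2), ∑ n ∈ Finset.range (j + k + 2),
          F m n * d1 (fmul (fpow u m) (fpow v n)) j k := by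
    show ((j + 1 + 1 - 1 : ℕ) : ℂ) * subst2 F u v (j + 1) k = _
    rw [subst2_extend hu hv F (j + 1) k (j + k + 1) (by omega), Finset.mul_sum]
    refine Finset.sum_congr rfl fun m _ => ?_
    rw [Finset.mul_sum]
    refine Finset.sum_congr rfl fun n _ => ?_
    show _ = F m n * (((j + 1 : ℕ) : ℂ) * fmul (fpow u m) (fpow v n) (j + 1) k)
    push_cast
    ring
  simp only [Pi.add_apply]
  rw [fmul_subst2_left hu hv (d1 F) (d1 u) j k,
    fmul_subst2_left hu hv (d2 F) (d1 v) j k, lhs1]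
  have split : ∀ m n : ℕ, F m n * d1 (fmul (fpow u m) (fpow v n)) j k
      = F m n * fmul (d1 (fpow u m)) (fpow v n) j k
        + F m n * fmul (fpow u m) (d1 (fpow v n)) j k := by
    intro m n
    rw [d1_fmul]
    simp only [Pi.add_apply, mul_add]
  have e0 : (∑ m ∈ Finset.range (j + k + 2), ∑ n ∈ Finset.range (j + k + 2),
        F m n * d1 (fmul (fpow u m) (fpow v n)) j k)
      = (∑ m ∈ Finset.range (j + k + 2), ∑ n ∈ Finset.range (j + k + 2),
          F m n * fmul (d1 (fpow u m)) (fpow v n) j k)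
        + (∑ m ∈ Finset.range (j + k + 2), ∑ n ∈ Finset.range (j + k + 2),
          F m n * fmul (fpow u m) (d1 (fpow v n)) j k) := by
    simp only [split, Finset.sum_add_distrib]
  rw [e0]
  congr 1
  · -- u-part
    have h0 : (∑ n ∈ Finset.range (j + k + 2),
        F 0 n * fmul (d1 (fpow u 0)) (fpow v n) j k) = 0 := by
      refine Finset.sum_eq_zero fun n _ => ?_
      rw [show d1 (fpow u 0) = 0 by rw [show fpow u 0 = oneF from rfl, d1_oneF],
        zero_fmul]
      simp
    have htop : (∑ n ∈ Finset.range (j + k + 2),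
        (d1 F) (j + k + 1) n * fmul (fmul (fpow u (j + k + 1)) (fpow v n)) (d1 u) j k)
        = 0 := by
      refine Finset.sum_eq_zero fun n _ => ?_
      rw [hz _ _ _ (by omega), mul_zero]
    have L : (∑ m ∈ Finset.range (j + k + 2), ∑ n ∈ Finset.range (j + k + 2),
        F m n * fmul (d1 (fpow u m)) (fpow v n) j k)
        = ∑ m ∈ Finset.range (j + k + 1), ∑ n ∈ Finset.range (j + k + 2),
            F (m + 1) n * fmul (d1 (fpow u (m + 1))) (fpow v n) j k := by
      rw [Finset.sum_range_succ', h0, add_zero]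
    have R : (∑ m ∈ Finset.range (j + k + 2), ∑ n ∈ Finset.range (j + k + 2),
        (d1 F) m n * fmul (fmul (fpow u m) (fpow v n)) (d1 u) j k)
        = ∑ m ∈ Finset.range (j + k + 1), ∑ n ∈ Finset.range (j + k + 2),
            (d1 F) m n * fmul (fmul (fpow u m) (fpow v n)) (d1 u) j k := by
      rw [Finset.sum_range_succ, htop, add_zero]
    rw [L, R]
    refine Finset.sum_congr rfl fun m _ => Finset.sum_congr rfl fun n _ => ?_
    rw [d1_fpow, fmul_smul_left, fmul_right_comm]
    simp only [d1, Pi.smul_apply, smul_eq_mul]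
    push_cast
    ring
  · -- v-part
    refine Finset.sum_congr rfl fun m _ => ?_
    have h0 : F m 0 * fmul (fpow u m) (d1 (fpow v 0)) j k = 0 := by
      rw [show d1 (fpow v 0) = 0 by rw [show fpow v 0 = oneF from rfl, d1_oneF],
        fmul_zero]
      simp
    have htop : (d2 F) m (j + k + 1)
        * fmul (fmul (fpow u m) (fpow v (j + k + 1))) (d1 v) j k = 0 := by
      rw [hz _ _ _ (by omega), mul_zero]
    have L : (∑ n ∈ Finset.range (j + k + 2),
        F m n * fmul (fpow u m) (d1 (fpow v n)) j k)
        = ∑ n ∈ Finset.range (j + k + 1),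
            F m (n + 1) * fmul (fpow u m) (d1 (fpow v (n + 1))) j k := by
      rw [Finset.sum_range_succ', h0, add_zero]
    have R : (∑ n ∈ Finset.range (j + k + 2),
        (d2 F) m n * fmul (fmul (fpow u m) (fpow v n)) (d1 v) j k)
        = ∑ n ∈ Finset.range (j + k + 1),
            (d2 F) m n * fmul (fmul (fpow u m) (fpow v n)) (d1 v) j k := by
      rw [Finset.sum_range_succ, htop, add_zero]
    rw [L, R]
    refine Finset.sum_congr rfl fun n _ => ?_
    rw [d1_fpow, fmul_smul, ← fmul_assoc]
    simp only [d2, Pi.smul_apply, smul_eq_mul]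
    push_cast
    ring

lemma d2_subst2 {u v : FPS} (hu : u 0 0 = 0) (hv : v 0 0 = 0) (F : FPS) :
    d2 (subst2 F u v)
      = fmul (subst2 (d1 F) u v) (d2 u) + fmul (subst2 (d2 F) u v) (d2 v) := by
  have hsu : swapI u 0 0 = 0 := hu
  have hsv : swapI v 0 0 = 0 := hv
  have key := d1_subst2 hsu hsv F
  have : d2 (subst2 F u v) = swapI (d1 (subst2 F (swapI u) (swapI v))) := by
    rw [d2_eq_swap, swapI_subst2]
  rw [this, key, swapI_add, swapI_fmul, swapI_fmul, swapI_subst2, swapI_subst2,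
    swapI_swapI, swapI_swapI, swapI_d1, swapI_d1, swapI_swapI, swapI_swapI]
/-! ### the key identities for `ℰ·φ_z` and `ℰ·φ_z̄` -/

section Key

variable {l : ℂ} {φ : FPS}

lemma minus_zero00 (l : ℂ) (hφ0 : φ 0 0 = 0) : minus l φ 0 0 = 0 := by
  simp [minus, hφ0]

lemma err_d1 (hl : l ≠ 0) (hφ0 : φ 0 0 = 0) (q' : OPS) :
    fmul (Err l q' φ) (d1 φ)
      = d1 (subst2 (Sq q') (minus l φ) φ)
        - l⁻¹ • fmul (subst2 (d1 (Sq q')) (minus l φ) φ) (minus l (d1 φ))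
        + plus l (fmul (subst2 (d1 (Sq q')) (minus l φ) φ) (minus l (d1 φ))) := by
  have hu : minus l φ 0 0 = 0 := minus_zero00 l hφ0
  unfold Err
  rw [fmul_add_left, d1_subst2 hu hφ0, d1_minus hl, fmul_smul,
    plus_fmul hl, plus_minus hl, plus_subst2 hl, plus_minus hl]
  abel

lemma err_d2 (hl : l ≠ 0) (hφ0 : φ 0 0 = 0) (q' : OPS) :
    fmul (Err l q' φ) (d2 φ)
      = d2 (subst2 (Sq q') (minus l φ) φ)
        - l • fmul (subst2 (d1 (Sq q')) (minus l φ) φ) (minus l (d2 φ))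
        + plus l (fmul (subst2 (d1 (Sq q')) (minus l φ) φ) (minus l (d2 φ))) := by
  have hu : minus l φ 0 0 = 0 := minus_zero00 l hφ0
  unfold Err
  rw [fmul_add_left, d2_subst2 hu hφ0, d2_minus hl, fmul_smul,
    plus_fmul hl, plus_minus hl, plus_subst2 hl, plus_minus hl]
  abel

lemma err_d1_coeff (hl : l ≠ 0) (hφ0 : φ 0 0 = 0) (q' : OPS) (n : ℕ) :
    fmul (Err l q' φ) (d1 φ) n (n + 1)
      = ((n + 1 : ℕ) : ℂ) * subst2 (Sq q') (minus l φ) φ (n + 1) (n + 1) := by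
  rw [err_d1 hl hφ0 q']
  simp only [Pi.add_apply, Pi.sub_apply, Pi.smul_apply, smul_eq_mul, plus, d1]
  have hz : l ^ ((n : ℤ) - ((n + 1 : ℕ) : ℤ)) = l⁻¹ := by
    rw [show (n : ℤ) - ((n + 1 : ℕ) : ℤ) = -1 by push_cast; ring, zpow_neg_one]
  rw [hz]
  ring

lemma err_d2_coeff (hl : l ≠ 0) (hφ0 : φ 0 0 = 0) (q' : OPS) (n : ℕ) :
    fmul (Err l q' φ) (d2 φ) (n + 1) n
      = ((n + 1 : ℕ) : ℂ) * subst2 (Sq q') (minus l φ) φ (n + 1) (n + 1) := by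
  rw [err_d2 hl hφ0 q']
  simp only [Pi.add_apply, Pi.sub_apply, Pi.smul_apply, smul_eq_mul, plus, d2]
  have hz : l ^ (((n + 1 : ℕ) : ℤ) - (n : ℤ)) = l := by
    rw [show ((n + 1 : ℕ) : ℤ) - (n : ℤ) = 1 by push_cast; ring, zpow_one]
  rw [hz]
  ring

lemma Pip_err_iff (hl : l ≠ 0) (hφ0 : φ 0 0 = 0) (q' : OPS) :
    Pip (fmul (Err l q' φ) (d1 φ)) = 0
      ↔ ∀ n : ℕ, subst2 (Sq q') (minus l φ) φ (n + 1) (n + 1) = 0 := by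
  constructor
  · intro h n
    have h2 := congrFun (congrFun h n) (n + 1)
    simp only [Pip, if_pos rfl, Pi.zero_apply] at h2
    rw [err_d1_coeff hl hφ0 q' n] at h2
    have hn : ((n + 1 : ℕ) : ℂ) ≠ 0 := Nat.cast_ne_zero.mpr (Nat.succ_ne_zero n)
    exact (mul_eq_zero.mp h2).resolve_left hn
  · intro h
    funext j k
    simp only [Pip, Pi.zero_apply]
    split_ifs with hk
    · subst hk
      rw [err_d1_coeff hl hφ0 q' j, h j, mul_zero]
    · rfl

lemma Pim_err_iff (hl : l ≠ 0) (hφ0 : φ 0 0 = 0) (q' : OPS) :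
    Pim (fmul (Err l q' φ) (d2 φ)) = 0
      ↔ ∀ n : ℕ, subst2 (Sq q') (minus l φ) φ (n + 1) (n + 1) = 0 := by
  constructor
  · intro h n
    have h2 := congrFun (congrFun h (n + 1)) n
    simp only [Pim, if_pos rfl, Pi.zero_apply] at h2
    rw [err_d2_coeff hl hφ0 q' n] at h2
    have hn : ((n + 1 : ℕ) : ℂ) ≠ 0 := Nat.cast_ne_zero.mpr (Nat.succ_ne_zero n)
    exact (mul_eq_zero.mp h2).resolve_left hn
  · intro h
    funext j k
    simp only [Pim, Pi.zero_apply]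
    split_ifs with hk
    · subst hk
      rw [err_d2_coeff hl hφ0 q' k, h k, mul_zero]
    · rfl

lemma avg_iff (G : FPS) :
    avg G = oneF ↔ (G 0 0 = 1 ∧ ∀ n : ℕ, G (n + 1) (n + 1) = 0) := by
  constructor
  · intro h
    constructor
    · have := congrFun (congrFun h 0) 0
      simpa [avg, oneF] using this
    · intro n
      have := congrFun (congrFun h (n + 1)) (n + 1)
      simpa [avg, oneF] using this
  · rintro ⟨h0, h⟩
    funext j k
    simp only [avg, oneF]
    by_cases hjk : j = k
    · subst hjk
      rcases j with _ | n
      · simp [h0]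
      · simp [h n]
    · rw [if_neg hjk, if_neg (fun hc => hjk (hc.1.trans hc.2.symm))]

lemma subst2_zero_zero {u v : FPS} (hu : u 0 0 = 0) (hv : v 0 0 = 0)
    (F : FPS) : subst2 F u v 0 0 = F 0 0 := by
  simp [subst2, Finset.sum_range_one, fmul, fpow, oneF]

lemma Sq_zero_zero (q' : OPS) : Sq q' 0 0 = q' 0 := by
  simp [Sq, fmul, Finset.sum_range_one, substOne, fpow, oneF, cosSeries]

end Key
/-! ### linearity in `q` -/

lemma substOne_add (q1 q2 : OPS) (u : FPS) :
    substOne (q1 + q2) u = substOne q1 u + substOne q2 u := by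
  funext j k
  simp [substOne, add_mul, Finset.sum_add_distrib]

lemma substOne_smul (c : ℂ) (q1 : OPS) (u : FPS) :
    substOne (c • q1) u = c • substOne q1 u := by
  funext j k
  simp [substOne, Finset.mul_sum, mul_assoc]

lemma Sq_add (q1 q2 : OPS) : Sq (q1 + q2) = Sq q1 + Sq q2 := by
  unfold Sq
  rw [substOne_add, fmul_add_left]

lemma Sq_smul (c : ℂ) (q1 : OPS) : Sq (c • q1) = c • Sq q1 := by
  unfold Sq
  rw [substOne_smul, fmul_smul_left]

/-! ### congr / truncation -/

lemma substOne_congr {q1 q2 : OPS} {M : ℕ} (h : ∀ m, m ≤ M → q1 m = q2 m)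
    (u : FPS) {a b : ℕ} (hab : a + b ≤ M) :
    substOne q1 u a b = substOne q2 u a b := by
  unfold substOne
  refine Finset.sum_congr rfl fun m hm => ?_
  simp only [Finset.mem_range] at hm
  rw [h m (by omega)]

lemma Sq_congr {q1 q2 : OPS} {M : ℕ} (h : ∀ m, m ≤ M → q1 m = q2 m)
    {m1 m2 : ℕ} (hm : m1 + m2 ≤ M) :
    Sq q1 m1 m2 = Sq q2 m1 m2 := by
  unfold Sq
  rw [fmul_apply, fmul_apply]
  refine Finset.sum_congr rfl fun a ha => Finset.sum_congr rfl fun b hb => ?_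
  simp only [Finset.mem_range] at ha hb
  rw [substOne_congr h halfSum (by omega)]

lemma subst2_Sq_congr {u v : FPS} (hu : u 0 0 = 0) (hv : v 0 0 = 0)
    {q1 q2 : OPS} {M : ℕ} (h : ∀ m, m ≤ M → q1 m = q2 m)
    {j k : ℕ} (hjk : j + k ≤ M) :
    subst2 (Sq q1) u v j k = subst2 (Sq q2) u v j k := by
  unfold subst2
  refine Finset.sum_congr rfl fun m1 hm1 => Finset.sum_congr rfl fun m2 hm2 => ?_
  by_cases hd : m1 + m2 ≤ j + k
  · rw [Sq_congr h (by omega)]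
  · rw [fmul_fpow_fpow_eq_zero hu hv (by omega), mul_zero, mul_zero]

/-! ### the indicator series and the pivot coefficient -/

/-- indicator one-variable series `t^M`. -/
def eSer (M : ℕ) : OPS := fun m => if m = M then 1 else 0

lemma halfSum_eq_lin : halfSum = lin (1/2 : ℂ) (1/2 : ℂ) := rfl

lemma fpow_halfSum (M a b : ℕ) :
    fpow halfSum M a b
      = if a + b = M then (M.choose a : ℂ) * (1/2 : ℂ) ^ (a + b) else 0 := by
  rw [halfSum_eq_lin, lin_pow]
  split_ifs with h
  · rw [mul_assoc, ← pow_add]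
  · rfl

lemma substOne_eSer_halfSum (M a b : ℕ) :
    substOne (eSer M) halfSum a b
      = if a + b = M then (M.choose a : ℂ) * (1/2 : ℂ) ^ (a + b) else 0 := by
  unfold substOne eSer
  simp only [ite_mul, one_mul, zero_mul]
  rw [Finset.sum_ite_eq' (Finset.range (a + b + 1)) M]
  by_cases h : a + b = M
  · rw [if_pos (Finset.mem_range.mpr (by omega)), fpow_halfSum, if_pos h]
  · split_ifs with hMm
    · rw [fpow_halfSum, if_neg h]
    · rfl

lemma C00 : substOne cosSeries halfDiff 0 0 = 1 := by
  simp [substOne, cosSeries, fpow, oneF]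

lemma Sq_eSer_low (M : ℕ) {m1 m2 : ℕ} (h : m1 + m2 < M) : Sq (eSer M) m1 m2 = 0 := by
  unfold Sq
  rw [fmul_apply]
  refine Finset.sum_eq_zero fun a ha => Finset.sum_eq_zero fun b hb => ?_
  simp only [Finset.mem_range] at ha hb
  rw [substOne_eSer_halfSum, if_neg (by omega), zero_mul]

lemma Sq_eSer_diag (M : ℕ) {m1 m2 : ℕ} (h : m1 + m2 = M) :
    Sq (eSer M) m1 m2 = (M.choose m1 : ℂ) * (1/2 : ℂ) ^ M := by
  unfold Sq
  rw [fmul_apply]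
  rw [Finset.sum_eq_single m1]
  · rw [Finset.sum_eq_single m2]
    · rw [substOne_eSer_halfSum, if_pos (by omega), Nat.sub_self, Nat.sub_self, C00,
        mul_one, h]
    · intro b hb hbne
      simp only [Finset.mem_range] at hb
      rw [substOne_eSer_halfSum, if_neg (by omega), zero_mul]
    · intro habs
      exact absurd (Finset.mem_range.mpr (by omega)) habs
  · intro a ha hane
    simp only [Finset.mem_range] at ha
    refine Finset.sum_eq_zero fun b hb => ?_
    simp only [Finset.mem_range] at hb
    rw [substOne_eSer_halfSum, if_neg (by omega), zero_mul]
  · intro habs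
    exact absurd (Finset.mem_range.mpr (by omega)) habs

lemma fpow_smul (c : ℂ) (f : FPS) (M : ℕ) :
    fpow (c • f) M = c ^ M • fpow f M := by
  induction M with
  | zero => simp [fpow]
  | succ M ih =>
      show fmul (c • f) (fpow (c • f) M) = _
      rw [ih, fmul_smul, fmul_smul_left, pow_succ, smul_smul]
      rfl

lemma lin_zero00 (x y : ℂ) : lin x y 0 0 = 0 := by simp [lin]

lemma fpow_top {w : FPS} (hw : w 0 0 = 0) :
    ∀ (m j k : ℕ), j + k = m → fpow w m j k = fpow (lin (w 1 0) (w 0 1)) m j k := by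
  intro m
  induction m with
  | zero => intro j k h; rfl
  | succ m ih =>
      intro j k h
      show fmul w (fpow w m) j k = fmul (lin (w 1 0) (w 0 1)) (fpow (lin (w 1 0) (w 0 1)) m) j k
      rw [fmul_apply, fmul_apply]
      refine Finset.sum_congr rfl fun a ha => Finset.sum_congr rfl fun b hb => ?_
      simp only [Finset.mem_range] at ha hb
      by_cases h1 : a = 1 ∧ b = 0
      · rw [h1.1, h1.2, ih (j - 1) (k - 0) (by omega)]
        simp [lin]
      · by_cases h2 : a = 0 ∧ b = 1
        · rw [h2.1, h2.2, ih (j - 0) (k - 1) (by omega)]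
          simp [lin]
        · by_cases h0 : a = 0 ∧ b = 0
          · rw [h0.1, h0.2, hw, lin_zero00, zero_mul, zero_mul]
          · have hge : 2 ≤ a + b := by
              rcases Decidable.not_and_iff_or_not.mp h1 with hx | hx <;>
                rcases Decidable.not_and_iff_or_not.mp h2 with hy | hy <;>
                rcases Decidable.not_and_iff_or_not.mp h0 with hz | hz <;> omega
            rw [fpow_eq_zero_of_lt hw (by omega), fpow_eq_zero_of_lt (lin_zero00 _ _) (by omega),
              mul_zero, mul_zero]

/-- The pivot coefficient `c_n`. -/
lemma subst2_Sq_eSer {u v : FPS} (hu : u 0 0 = 0) (hv : v 0 0 = 0) (n : ℕ) :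
    subst2 (Sq (eSer (2 * n))) u v n n
      = ((2 * n).choose n : ℂ)
        * ((u 1 0 + v 1 0) / 2) ^ n * ((u 0 1 + v 0 1) / 2) ^ n := by
  set ξ : FPS := (2⁻¹ : ℂ) • (u + v) with hξ
  have hξ00 : ξ 0 0 = 0 := by simp [hξ, hu, hv]
  have step1 : subst2 (Sq (eSer (2 * n))) u v n n
      = ∑ m1 ∈ Finset.range (2 * n + 1),
          ((2 * n).choose m1 : ℂ) * (1/2 : ℂ) ^ (2 * n)
            * fmul (fpow u m1) (fpow v (2 * n - m1)) n n := by
    rw [show subst2 (Sq (eSer (2 * n))) u v n n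
        = ∑ m1 ∈ Finset.range (n + n + 1), ∑ m2 ∈ Finset.range (n + n + 1),
            Sq (eSer (2 * n)) m1 m2 * fmul (fpow u m1) (fpow v m2) n n from rfl]
    rw [show n + n + 1 = 2 * n + 1 by omega]
    refine Finset.sum_congr rfl fun m1 hm1 => ?_
    simp only [Finset.mem_range] at hm1
    rw [Finset.sum_eq_single (2 * n - m1)]
    · rw [Sq_eSer_diag (2 * n) (by omega)]
    · intro m2 hm2 hne
      simp only [Finset.mem_range] at hm2
      by_cases hlt : m1 + m2 < 2 * n
      · rw [Sq_eSer_low (2 * n) hlt, zero_mul]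
      · rw [fmul_fpow_fpow_eq_zero hu hv (by omega), mul_zero]
    · intro habs
      exact absurd (Finset.mem_range.mpr (by omega)) habs
  have step2 : fpow ξ (2 * n) n n
      = ∑ m1 ∈ Finset.range (2 * n + 1),
          ((2 * n).choose m1 : ℂ) * (1/2 : ℂ) ^ (2 * n)
            * fmul (fpow u m1) (fpow v (2 * n - m1)) n n := by
    rw [hξ, fpow_smul, fpow_add]
    rw [Pi.smul_apply, Pi.smul_apply]
    rw [Finset.sum_apply, Finset.sum_apply]
    rw [Finset.smul_sum]
    refine Finset.sum_congr rfl fun m1 _ => ?_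
    simp only [Pi.smul_apply, smul_eq_mul]
    rw [show ((1:ℂ)/2) ^ (2*n) = (2⁻¹:ℂ) ^ (2*n) by norm_num]
    ring
  have step3 : fpow ξ (2 * n) n n
      = ((2 * n).choose n : ℂ) * (ξ 1 0) ^ n * (ξ 0 1) ^ n := by
    rw [fpow_top hξ00 (2 * n) n n (by omega), lin_pow, if_pos (by omega : n + n = 2 * n)]
  rw [step1, ← step2, step3]
  have e1 : ξ 1 0 = (u 1 0 + v 1 0) / 2 := by
    simp [hξ]; ring
  have e2 : ξ 0 1 = (u 0 1 + v 0 1) / 2 := by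
    simp [hξ]; ring
  rw [e1, e2]
lemma halfDiff_eq_lin : halfDiff = lin (1/2 : ℂ) (-(1/2) : ℂ) := rfl

lemma substOne_halfSum_apply (q : OPS) (a b : ℕ) :
    substOne q halfSum a b
      = q (a + b) * ((a + b).choose a : ℂ) * (1/2 : ℂ) ^ (a + b) := by
  unfold substOne
  rw [show (∑ m ∈ Finset.range (a + b + 1), q m * fpow halfSum m a b)
      = ∑ m ∈ Finset.range (a + b + 1),
          (if a + b = m then q m * (((m).choose a : ℂ) * (1/2 : ℂ) ^ (a + b)) else 0) from
    Finset.sum_congr rfl fun m _ => by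
      rw [halfSum_eq_lin, lin_pow]
      split_ifs with h
      · rw [mul_assoc, ← pow_add]
      · rw [mul_zero]]
  rw [Finset.sum_ite_eq (Finset.range (a + b + 1)) (a + b)]
  rw [if_pos (Finset.mem_range.mpr (by omega))]
  ring

lemma substOne_halfDiff_apply (q : OPS) (a b : ℕ) :
    substOne q halfDiff a b
      = q (a + b) * ((a + b).choose a : ℂ) * (1/2 : ℂ) ^ a * (-(1/2) : ℂ) ^ b := by
  unfold substOne
  rw [show (∑ m ∈ Finset.range (a + b + 1), q m * fpow halfDiff m a b)
      = ∑ m ∈ Finset.range (a + b + 1),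
          (if a + b = m then
            q m * (((m).choose a : ℂ) * (1/2 : ℂ) ^ a * (-(1/2) : ℂ) ^ b) else 0) from
    Finset.sum_congr rfl fun m _ => by
      rw [halfDiff_eq_lin, lin_pow]
      split_ifs with h
      · ring
      · rw [mul_zero]]
  rw [Finset.sum_ite_eq (Finset.range (a + b + 1)) (a + b)]
  rw [if_pos (Finset.mem_range.mpr (by omega))]
  ring

lemma fpow_one' (f : FPS) : fpow f 1 = f := by
  show fmul f (fpow f 0) = f
  exact fmul_one f

lemma fpow_two' (f : FPS) : fpow f 2 = fmul f f := by
  show fmul f (fpow f 1) = _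
  rw [fpow_one']

lemma cos0 : cosSeries 0 = 1 := by norm_num [cosSeries]
lemma cos1 : cosSeries 1 = 0 := by norm_num [cosSeries]
lemma cos2 : cosSeries 2 = -(1/2) := by norm_num [cosSeries, Nat.factorial]

lemma Gq1 {l : ℂ} {φ : FPS} (hl : l ≠ 0) (hφ : normalized φ) (q : OPS)
    (hq0 : q 0 = 1) (hq1 : q 1 = 0)
    (hq2 : q 2 * (l + 1) ^ 2 = (-(1 / 2) : ℂ) * (l - 1) ^ 2) :
    subst2 (Sq q) (minus l φ) φ 1 1 = 0 := by
  obtain ⟨h00, h10, h01, h20, h11, h02⟩ := hφ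
  set u : FPS := minus l φ with hudef
  have hu00 : u 0 0 = 0 := by simp [hudef, minus, h00]
  have hu10 : u 1 0 = l⁻¹ := by
    simp [hudef, minus, h10, zpow_neg_one]
  have hu01 : u 0 1 = l := by simp [hudef, minus, h01]
  have hu20 : u 2 0 = 0 := by simp [hudef, minus, h20]
  have hu11 : u 1 1 = 0 := by simp [hudef, minus, h11]
  have hu02 : u 0 2 = 0 := by simp [hudef, minus, h02]
  -- the W values
  have W00 : fmul (fpow u 0) (fpow φ 0) 1 1 = 0 := by
    simp [fpow, fmul, oneF, Finset.sum_range_succ]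
  have W10 : fmul (fpow u 1) (fpow φ 0) 1 1 = 0 := by
    rw [fpow_one', show fpow φ 0 = oneF from rfl, fmul_one, hu11]
  have W01 : fmul (fpow u 0) (fpow φ 1) 1 1 = 0 := by
    rw [fpow_one', show fpow u 0 = oneF from rfl, one_fmul, h11]
  have W11 : fmul (fpow u 1) (fpow φ 1) 1 1 = l + l⁻¹ := by
    rw [fpow_one', fpow_one', fmul_apply]
    simp [Finset.sum_range_succ, hu00, hu10, hu01, hu11, h00, h10, h01, h11]
  have W20 : fmul (fpow u 2) (fpow φ 0) 1 1 = 2 := by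
    rw [show fpow φ 0 = oneF from rfl, fmul_one, fpow_two', fmul_apply]
    simp [Finset.sum_range_succ, hu00, hu10, hu01, hu11]
    field_simp
    try norm_num
  have W02 : fmul (fpow u 0) (fpow φ 2) 1 1 = 2 := by
    rw [show fpow u 0 = oneF from rfl, one_fmul, fpow_two', fmul_apply]
    simp [Finset.sum_range_succ, h00, h10, h01, h11]
    norm_num
  have W21 : fmul (fpow u 2) (fpow φ 1) 1 1 = 0 :=
    fmul_fpow_fpow_eq_zero hu00 h00 (by omega)
  have W12 : fmul (fpow u 1) (fpow φ 2) 1 1 = 0 :=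
    fmul_fpow_fpow_eq_zero hu00 h00 (by omega)
  have W22 : fmul (fpow u 2) (fpow φ 2) 1 1 = 0 :=
    fmul_fpow_fpow_eq_zero hu00 h00 (by omega)
  -- the Sq values
  have S11 : Sq q 1 1 = 1/4 + q 2 / 2 := by
    rw [show Sq q 1 1 = fmul (substOne q halfSum) (substOne cosSeries halfDiff) 1 1 from rfl,
      fmul_apply]
    simp only [Finset.sum_range_succ, Finset.sum_range_zero,
      substOne_halfSum_apply, substOne_halfDiff_apply]
    norm_num [hq0, hq1, cos0, cos1, cos2]
    ring
  have S20 : Sq q 2 0 = -(1/8) + q 2 / 4 := by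
    rw [show Sq q 2 0 = fmul (substOne q halfSum) (substOne cosSeries halfDiff) 2 0 from rfl,
      fmul_apply]
    simp only [Finset.sum_range_succ, Finset.sum_range_zero,
      substOne_halfSum_apply, substOne_halfDiff_apply]
    norm_num [hq0, hq1, cos0, cos1, cos2]
    ring
  have S02 : Sq q 0 2 = -(1/8) + q 2 / 4 := by
    rw [show Sq q 0 2 = fmul (substOne q halfSum) (substOne cosSeries halfDiff) 0 2 from rfl,
      fmul_apply]
    simp only [Finset.sum_range_succ, Finset.sum_range_zero,
      substOne_halfSum_apply, substOne_halfDiff_apply]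
    norm_num [hq0, hq1, cos0, cos1, cos2]
    ring
  -- assemble
  rw [show subst2 (Sq q) u φ 1 1
      = ∑ m ∈ Finset.range 3, ∑ n ∈ Finset.range 3,
          Sq q m n * fmul (fpow u m) (fpow φ n) 1 1 from rfl]
  simp only [Finset.sum_range_succ, Finset.sum_range_zero]
  rw [W00, W10, W01, W11, W20, W02, W21, W12, W22, S11, S20, S02]
  field_simp
  linear_combination (32 : ℂ) * hq2
/-- truncation of a one-variable series below index `M`. -/
def trOPS (M : ℕ) (r : OPS) : OPS := fun i => if i < M then r i else 0

/-- The recursively defined correction coefficients. -/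
noncomputable def etaFun (l : ℂ) (q : OPS) (φ : FPS) : ℕ → ℂ := fun m =>
  if m % 2 = 1 ∨ m < 4 then 0
  else
    -(subst2 (Sq (q + fun i => if _ : i < m then etaFun l q φ i else 0))
        (minus l φ) φ (m / 2) (m / 2))
      / subst2 (Sq (eSer m)) (minus l φ) φ (m / 2) (m / 2)
termination_by m => m

lemma etaFun_eq (l : ℂ) (q : OPS) (φ : FPS) (m : ℕ) :
    etaFun l q φ m
      = if m % 2 = 1 ∨ m < 4 then 0
        else
          -(subst2 (Sq (q + trOPS m (etaFun l q φ))) (minus l φ) φ (m / 2) (m / 2))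
            / subst2 (Sq (eSer m)) (minus l φ) φ (m / 2) (m / 2) := by
  rw [etaFun]
  simp only [trOPS, dite_eq_ite]
  rfl
/-- There is a unique correction `Δq(t) = Σ_{k≥2} η_{2k} t^{2k}` making
both projections `Π₊(ℰ(q+Δq,φ)·φ_z)` and `Π(ℰ(q+Δq,φ)·φ_z̄)` vanish; equivalently
`[S_{q+Δq}(φ⁻,φ)] = 1`. -/
theorem outer_equation_solution
    (l : ℂ) (hl : ‖l‖ = 1) (hru : ∀ n : ℕ, 0 < n → l ^ n ≠ 1)
    (q : OPS) (hq0 : q 0 = 1) (hqe : ∀ m : ℕ, Odd m → q m = 0)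
    (hq2 : q 2 * (l + 1) ^ 2 = (-(1 / 2) : ℂ) * (l - 1) ^ 2)
    (φ : FPS) (hφ : normalized φ) (hsym : swapI φ = φ) :
    ∃! Δq : OPS,
      (∀ m : ℕ, (Odd m ∨ m < 4) → Δq m = 0) ∧
      Pip (fmul (Err l (q + Δq) φ) (d1 φ)) = 0 ∧
      Pim (fmul (Err l (q + Δq) φ) (d2 φ)) = 0 ∧
      avg (subst2 (Sq (q + Δq)) (minus l φ) φ) = oneF := by
  have hl0 : l ≠ 0 := by
    intro h; rw [h] at hl; simp at hl
  have hv : φ 0 0 = 0 := hφ.1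
  have hu : minus l φ 0 0 = 0 := minus_zero00 l hv
  have hlm1 : l + 1 ≠ 0 := by
    intro h
    refine hru 2 (by norm_num) ?_
    have : l = -1 := by linear_combination h
    rw [this]; norm_num
  have hlinv1 : l⁻¹ + 1 ≠ 0 := by
    have he : l⁻¹ + 1 = l⁻¹ * (l + 1) := by
      field_simp
      ring
    rw [he]
    exact mul_ne_zero (inv_ne_zero hl0) hlm1
  have hu10 : minus l φ 1 0 = l⁻¹ := by simp [minus, hφ.2.1, zpow_neg_one]
  have hu01 : minus l φ 0 1 = l := by simp [minus, hφ.2.2.1]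
  have hCne : ∀ n : ℕ, subst2 (Sq (eSer (2 * n))) (minus l φ) φ n n ≠ 0 := by
    intro n
    rw [subst2_Sq_eSer hu hv n, hu10, hu01, hφ.2.1, hφ.2.2.1]
    refine mul_ne_zero (mul_ne_zero ?_
      (pow_ne_zero _ (div_ne_zero hlinv1 two_ne_zero)))
      (pow_ne_zero _ (div_ne_zero hlm1 two_ne_zero))
    exact Nat.cast_ne_zero.mpr (Nat.choose_pos (by omega)).ne'
  have hsplit : ∀ (r : OPS) (n : ℕ),
      subst2 (Sq (q + r)) (minus l φ) φ n n
        = subst2 (Sq (q + trOPS (2 * n) r)) (minus l φ) φ n n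
          + r (2 * n) * subst2 (Sq (eSer (2 * n))) (minus l φ) φ n n := by
    intro r n
    have e1 : subst2 (Sq (q + r)) (minus l φ) φ n n
        = subst2 (Sq ((q + trOPS (2 * n) r) + r (2 * n) • eSer (2 * n)))
            (minus l φ) φ n n := by
      refine subst2_Sq_congr hu hv (M := 2 * n) ?_ (by omega)
      intro m hm
      simp only [Pi.add_apply, Pi.smul_apply, smul_eq_mul, trOPS, eSer]
      by_cases hlt : m < 2 * n
      · rw [if_pos hlt, if_neg (by omega)]; ring
      · have hmeq : m = 2 * n := by omega
        subst hmeq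
        rw [if_neg (lt_irrefl _), if_pos rfl]; ring
    rw [e1, Sq_add, subst2_addF, Pi.add_apply, Pi.add_apply, Sq_smul, subst2_smulF]
    simp only [Pi.smul_apply, smul_eq_mul]
  set Δq := etaFun l q φ with hΔdef
  have hΔz : ∀ m : ℕ, (Odd m ∨ m < 4) → Δq m = 0 := by
    intro m hm
    rw [hΔdef, etaFun_eq, if_pos]
    rcases hm with h | h
    · exact Or.inl (Nat.odd_iff.mp h)
    · exact Or.inr h
  have hdiag : ∀ n : ℕ, 1 ≤ n → subst2 (Sq (q + Δq)) (minus l φ) φ n n = 0 := by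
    intro n hn
    rcases Nat.lt_or_ge n 2 with h2 | h2
    · have hn1 : n = 1 := by omega
      subst hn1
      have e : subst2 (Sq (q + Δq)) (minus l φ) φ 1 1
          = subst2 (Sq q) (minus l φ) φ 1 1 := by
        refine subst2_Sq_congr hu hv (M := 2) ?_ (by omega)
        intro m hm
        have hz : Δq m = 0 := hΔz m (Or.inr (by omega))
        simp [Pi.add_apply, hz]
      rw [e]
      exact Gq1 hl0 hφ q hq0 (hqe 1 odd_one) hq2
    · rw [hsplit Δq n]
      have hdiv : 2 * n / 2 = n := by omega
      have hcalc : Δq (2 * n)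
          = -(subst2 (Sq (q + trOPS (2 * n) Δq)) (minus l φ) φ n n)
            / subst2 (Sq (eSer (2 * n))) (minus l φ) φ n n := by
        rw [hΔdef, etaFun_eq, if_neg (by omega), hdiv]
      rw [hcalc, div_mul_cancel₀ _ (hCne n)]
      ring
  refine ⟨Δq, ⟨hΔz, ?_, ?_, ?_⟩, ?_⟩
  · exact (Pip_err_iff hl0 hv (q + Δq)).mpr fun n => hdiag (n + 1) (by omega)
  · exact (Pim_err_iff hl0 hv (q + Δq)).mpr fun n => hdiag (n + 1) (by omega)
  · refine (avg_iff _).mpr ⟨?_, fun n => hdiag (n + 1) (by omega)⟩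
    rw [subst2_zero_zero hu hv, Sq_zero_zero]
    have : Δq 0 = 0 := hΔz 0 (Or.inr (by norm_num))
    simp [Pi.add_apply, hq0, this]
  · rintro Δq' ⟨hz', hPip', hPim', havg'⟩
    have hdiag' : ∀ n : ℕ, 1 ≤ n → subst2 (Sq (q + Δq')) (minus l φ) φ n n = 0 := by
      intro n hn
      have h := ((avg_iff _).mp havg').2
      rcases n with _ | n'
      · omega
      · exact h n'
    funext m
    induction m using Nat.strong_induction_on with
    | _ m ih =>
      by_cases hm : m % 2 = 1 ∨ m < 4
      · rw [hz' m (hm.imp_left Nat.odd_iff.mpr), hΔz m (hm.imp_left Nat.odd_iff.mpr)]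
      · have hmev : m % 2 = 0 := by omega
        have hm4 : 4 ≤ m := by omega
        have hm2 : m = 2 * (m / 2) := by omega
        set n := m / 2 with hndef
        have h1 := hdiag' n (by omega)
        have h2 := hdiag n (by omega)
        rw [hsplit Δq' n] at h1
        rw [hsplit Δq n] at h2
        have htr : trOPS (2 * n) Δq' = trOPS (2 * n) Δq := by
          funext i
          unfold trOPS
          split_ifs with hi
          · exact ih i (by omega)
          · rfl
        rw [htr] at h1
        have hkey : Δq' (2 * n) * subst2 (Sq (eSer (2 * n))) (minus l φ) φ n n
            = Δq (2 * n) * subst2 (Sq (eSer (2 * n))) (minus l φ) φ n n := by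
          linear_combination h1 - h2
        have := mul_right_cancel₀ (hCne n) hkey
        rw [hm2]
        exact this

end Treschev

end
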